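/- Let $X \in \mathbb{R}^{n \times m}$, $\sigma > 0$, $u \in \mathbb{R}^m$ the all-ones vector, $\mu_X = \frac{1}{m} X u$, and $C_X = \frac{1}{m}(XX^\top - \frac{1}{m} Xuu^\top X^\top)$. Then the function $(\Theta,\beta) \mapsto \|\Theta X + \beta u^\top - X\|_F^2 + m\sigma^2\|\Theta\|_F^2$ attains its global minimum at $\hat{\Theta}_2 = C_X(C_X + \sigma^2 I_n)^{-1}$ and $\hat{\beta}_2 = (I_n - \hat{\Theta}_2)\mu_X$. -/

import Mathlib

open MeasureTheory ProbabilityTheory Matrix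

noncomputable def frobSq {n m : ℕ} (M : Matrix (Fin n) (Fin m) ℝ) : ℝ :=
  ∑ i, ∑ j, (M i j) ^ 2

def onesVec (m : ℕ) : Fin m → ℝ := fun _ => 1

noncomputable def covM {n m : ℕ} (Y : Matrix (Fin n) (Fin m) ℝ) : Matrix (Fin n) (Fin n) ℝ :=
  (m : ℝ)⁻¹ • (Y * Yᵀ - (m : ℝ)⁻¹ • (Y * vecMulVec (onesVec m) (onesVec m) * Yᵀ))

noncomputable def meanV {n m : ℕ} (Y : Matrix (Fin n) (Fin m) ℝ) : Fin n → ℝ :=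
  (m : ℝ)⁻¹ • Y.mulVec (onesVec m)

namespace Stmt10Aux
variable {n m p : ℕ}

lemma frobSq_eq_trace (M : Matrix (Fin n) (Fin m) ℝ) : frobSq M = (M * Mᵀ).trace := by
  simp [frobSq, Matrix.trace, Matrix.mul_apply, Matrix.diag, sq]

lemma trace_mul_transpose_nonneg (M : Matrix (Fin n) (Fin m) ℝ) : 0 ≤ (M * Mᵀ).trace := by
  rw [← frobSq_eq_trace]
  exact Finset.sum_nonneg fun _ _ => Finset.sum_nonneg fun _ _ => sq_nonneg _

lemma mul_vecMulVec (A : Matrix (Fin n) (Fin m) ℝ) (v : Fin m → ℝ) (w : Fin p → ℝ) :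
    A * vecMulVec v w = vecMulVec (A.mulVec v) w := by
  ext i j
  simp [Matrix.mul_apply, vecMulVec_apply, Matrix.mulVec, dotProduct,
    Finset.sum_mul, mul_assoc]

lemma vecMulVec_mul (v : Fin n → ℝ) (w : Fin m → ℝ) (A : Matrix (Fin m) (Fin p) ℝ) :
    vecMulVec v w * A = vecMulVec v (Aᵀ.mulVec w) := by
  ext i j
  simp [Matrix.mul_apply, vecMulVec_apply, Matrix.mulVec, dotProduct,
    Finset.mul_sum, mul_comm, mul_assoc, mul_left_comm]

lemma transpose_vecMulVec (v : Fin n → ℝ) (w : Fin m → ℝ) :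
    (vecMulVec v w)ᵀ = vecMulVec w v := by
  ext i j; simp [vecMulVec_apply, mul_comm]

lemma trace_vecMulVec (v w : Fin n → ℝ) : (vecMulVec v w).trace = v ⬝ᵥ w := by
  simp [Matrix.trace, Matrix.diag, vecMulVec_apply, dotProduct]

lemma vecMulVec_mul_vecMulVec (a : Fin n → ℝ) (b c : Fin m → ℝ) (d : Fin p → ℝ) :
    vecMulVec a b * vecMulVec c d = (b ⬝ᵥ c) • vecMulVec a d := by
  ext i j
  simp only [Matrix.mul_apply, vecMulVec_apply, Matrix.smul_apply, smul_eq_mul,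
    dotProduct]
  rw [Finset.sum_mul]
  exact Finset.sum_congr rfl fun k _ => by ring

lemma posSemidef_smul {A : Matrix (Fin n) (Fin n) ℝ} (hA : A.PosSemidef) {c : ℝ} (hc : 0 ≤ c) :
    (c • A).PosSemidef := by
  refine ⟨?_, fun x => ?_⟩
  · show (c • A)ᴴ = _
    rw [conjTranspose_smul, hA.1]; simp
  · exact (hA.smul hc).2 x

lemma onesVec_dot (m : ℕ) : (onesVec m) ⬝ᵥ (onesVec m) = (m : ℝ) := by
  simp [onesVec, dotProduct]

lemma covM_transpose (X : Matrix (Fin n) (Fin m) ℝ) : (covM X)ᵀ = covM X := by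
  simp [covM, transpose_smul, transpose_sub, transpose_mul, transpose_transpose,
    transpose_vecMulVec, Matrix.mul_assoc]

lemma covM_posSemidef (hm : (m : ℝ) ≠ 0) (X : Matrix (Fin n) (Fin m) ℝ) :
    (covM X).PosSemidef := by
  set u := onesVec m
  set N : Matrix (Fin m) (Fin m) ℝ := vecMulVec u u with hN
  set P : Matrix (Fin m) (Fin m) ℝ := 1 - (m : ℝ)⁻¹ • N with hP
  have hNN : N * N = (m : ℝ) • N := by
    rw [hN, vecMulVec_mul_vecMulVec, onesVec_dot]
  have hPt : Pᵀ = P := by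
    rw [hP, transpose_sub, transpose_one, transpose_smul, hN, transpose_vecMulVec]
  have hPP : P * P = P := by
    rw [hP]
    simp only [Matrix.sub_mul, Matrix.mul_sub, Matrix.one_mul, Matrix.mul_one,
      Matrix.smul_mul, Matrix.mul_smul, hNN, smul_smul]
    match_scalars <;> field_simp <;> ring
  have e1 : (X * P) * (X * P)ᵀ
      = X * Xᵀ - (m : ℝ)⁻¹ • (X * vecMulVec u u * Xᵀ) := by
    rw [transpose_mul, hPt]
    calc (X * P) * (P * Xᵀ) = X * (P * P) * Xᵀ := by simp only [Matrix.mul_assoc]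
      _ = X * P * Xᵀ := by rw [hPP]
      _ = _ := by
          rw [hP, Matrix.mul_sub, Matrix.mul_one, Matrix.mul_smul, Matrix.sub_mul,
            Matrix.smul_mul, hN]
  have hC : covM X = (m : ℝ)⁻¹ • ((X * P) * (X * P)ᵀ) := by
    rw [covM, e1]
  rw [hC]
  refine posSemidef_smul ?_ (by positivity)
  have := posSemidef_self_mul_conjTranspose (X * P)
  rwa [conjTranspose_eq_transpose_of_trivial] at this

end Stmt10Aux

open Stmt10Aux
theorem stmt10 {n m : ℕ} (X : Matrix (Fin n) (Fin m) ℝ) (σ : ℝ) (hσ : 0 < σ) :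
    ∀ (Θ : Matrix (Fin n) (Fin n) ℝ) (β : Fin n → ℝ),
      frobSq (covM X * (covM X + σ ^ 2 • (1 : Matrix (Fin n) (Fin n) ℝ))⁻¹ * X
            + vecMulVec (((1 : Matrix (Fin n) (Fin n) ℝ)
                - covM X * (covM X + σ ^ 2 • (1 : Matrix (Fin n) (Fin n) ℝ))⁻¹).mulVec
              (meanV X)) (onesVec m) - X)
          + (m : ℝ) * σ ^ 2 *
            frobSq (covM X * (covM X + σ ^ 2 • (1 : Matrix (Fin n) (Fin n) ℝ))⁻¹)
        ≤ frobSq (Θ * X + vecMulVec β (onesVec m) - X) + (m : ℝ) * σ ^ 2 * frobSq Θ := by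
  intro Θ β
  rcases Nat.eq_zero_or_pos m with hm0 | hm0
  · subst hm0
    simp [frobSq]
  have hm : (m : ℝ) ≠ 0 := Nat.cast_ne_zero.mpr hm0.ne'
  set u := onesVec m with hu
  set C := covM X with hCdef
  set μ := meanV X with hμdef
  set S : Matrix (Fin n) (Fin n) ℝ := C + σ ^ 2 • 1 with hSdef
  set T : Matrix (Fin n) (Fin n) ℝ := C * S⁻¹ with hTdef
  have hCsym : Cᵀ = C := covM_transpose X
  have hCpsd : C.PosSemidef := covM_posSemidef hm X
  have hσI : (σ ^ 2 • (1 : Matrix (Fin n) (Fin n) ℝ)).PosDef := by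
    rw [smul_one_eq_diagonal]
    exact posDef_diagonal_iff.mpr fun _ => by positivity
  have hSpd : S.PosDef := Matrix.PosDef.posSemidef_add hCpsd hσI
  have hSpsd : S.PosSemidef := hSpd.posSemidef
  have hSsym : Sᵀ = S := hSpsd.isHermitian.eq
  have hdet : IsUnit S.det := isUnit_iff_ne_zero.mpr (ne_of_gt hSpd.det_pos)
  have hST : S * Tᵀ = C := by
    rw [hTdef, transpose_mul, transpose_nonsing_inv, hSsym, hCsym,
      ← Matrix.mul_assoc, Matrix.mul_nonsing_inv _ hdet, Matrix.one_mul]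
  have hv : X.mulVec u = (m : ℝ) • μ := by
    rw [hμdef, meanV, smul_smul, mul_inv_cancel₀ hm, one_smul]
  have hOuter : X * vecMulVec u u * Xᵀ = (m : ℝ) • ((m : ℝ) • vecMulVec μ μ) := by
    rw [mul_vecMulVec, vecMulVec_mul, transpose_transpose, hv]
    ext i j
    simp only [vecMulVec_apply, Matrix.smul_apply, Pi.smul_apply, smul_eq_mul]
    ring
  have hXXT : X * Xᵀ = (m : ℝ) • C + (m : ℝ) • vecMulVec μ μ := by
    have h1 : (m : ℝ) • C = X * Xᵀ - (m : ℝ) • vecMulVec μ μ := by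
      rw [hCdef, covM, smul_smul, mul_inv_cancel₀ hm, one_smul, hOuter,
        smul_smul, inv_mul_cancel₀ hm, one_smul]
    rw [h1]; abel
  -- the expansion identity
  have expand : ∀ (Θ' : Matrix (Fin n) (Fin n) ℝ) (β' : Fin n → ℝ),
      frobSq (Θ' * X + vecMulVec β' u - X) + (m : ℝ) * σ ^ 2 * frobSq Θ'
        = (m : ℝ) * (((Θ' * S * Θ'ᵀ).trace - 2 * (Θ' * C).trace + C.trace)
            + ((Θ' - 1).mulVec μ + β') ⬝ᵥ ((Θ' - 1).mulVec μ + β')) := by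
    intro Θ' β'
    set A : Matrix (Fin n) (Fin n) ℝ := Θ' - 1 with hA
    have hM : Θ' * X + vecMulVec β' u - X = A * X + vecMulVec β' u := by
      rw [hA, Matrix.sub_mul, Matrix.one_mul]; abel
    have hAμ : A.mulVec (X.mulVec u) = (m : ℝ) • A.mulVec μ := by
      rw [hv, Matrix.mulVec_smul]
    have hsq : frobSq (A * X + vecMulVec β' u)
        = (m : ℝ) * ((A * C * Aᵀ).trace
            + (A.mulVec μ ⬝ᵥ A.mulVec μ + A.mulVec μ ⬝ᵥ β' + β' ⬝ᵥ A.mulVec μ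
              + β' ⬝ᵥ β')) := by
      rw [frobSq_eq_trace]
      rw [transpose_add, transpose_mul, transpose_vecMulVec]
      rw [Matrix.add_mul, Matrix.mul_add, Matrix.mul_add]
      have t1 : (A * X * (Xᵀ * Aᵀ)).trace
          = (m : ℝ) * (A * C * Aᵀ).trace + (m : ℝ) * (A.mulVec μ ⬝ᵥ A.mulVec μ) := by
        have e : A * X * (Xᵀ * Aᵀ) = A * (X * Xᵀ) * Aᵀ := by
          simp only [Matrix.mul_assoc]
        have eW : (A * vecMulVec μ μ * Aᵀ).trace = A.mulVec μ ⬝ᵥ A.mulVec μ := by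
          rw [mul_vecMulVec, vecMulVec_mul, transpose_transpose, trace_vecMulVec]
        rw [e, hXXT, Matrix.mul_add, Matrix.add_mul, trace_add,
          Matrix.mul_smul, Matrix.smul_mul, trace_smul,
          Matrix.mul_smul, Matrix.smul_mul, trace_smul, eW]
        simp [smul_eq_mul]
      have t2 : (A * X * vecMulVec u β').trace = (m : ℝ) * (A.mulVec μ ⬝ᵥ β') := by
        rw [mul_vecMulVec, trace_vecMulVec, ← Matrix.mulVec_mulVec, hAμ,
          smul_dotProduct, smul_eq_mul]
      have t3 : (vecMulVec β' u * (Xᵀ * Aᵀ)).trace = (m : ℝ) * (β' ⬝ᵥ A.mulVec μ) := by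
        rw [vecMulVec_mul, trace_vecMulVec, transpose_mul, transpose_transpose,
          transpose_transpose, ← Matrix.mulVec_mulVec, hAμ, dotProduct_smul, smul_eq_mul]
      have t4 : (vecMulVec β' u * vecMulVec u β').trace = (m : ℝ) * (β' ⬝ᵥ β') := by
        rw [vecMulVec_mul_vecMulVec, onesVec_dot, trace_smul, trace_vecMulVec, smul_eq_mul]
      rw [trace_add, trace_add, trace_add, t1, t2, t3, t4]
      ring
    have hquad : (A * C * Aᵀ).trace + σ ^ 2 * (Θ' * Θ'ᵀ).trace
        = (Θ' * S * Θ'ᵀ).trace - 2 * (Θ' * C).trace + C.trace := by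
      have hCT : (C * Θ'ᵀ).trace = (Θ' * C).trace := by
        rw [← trace_transpose (C * Θ'ᵀ), transpose_mul, transpose_transpose, hCsym]
      have hACA : A * C * Aᵀ = Θ' * C * Θ'ᵀ - Θ' * C - C * Θ'ᵀ + C := by
        rw [hA]
        simp only [transpose_sub, transpose_one, Matrix.sub_mul, Matrix.mul_sub,
          Matrix.one_mul, Matrix.mul_one]
        abel
      have hSθ : Θ' * S * Θ'ᵀ = Θ' * C * Θ'ᵀ + σ ^ 2 • (Θ' * Θ'ᵀ) := by
        rw [hSdef]
        simp only [Matrix.mul_add, Matrix.add_mul, Matrix.mul_smul, Matrix.smul_mul,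
          Matrix.mul_one]
      rw [hACA, hSθ]
      simp only [trace_add, trace_sub, trace_smul, smul_eq_mul]
      rw [hCT]
      ring
    rw [hM, hsq, frobSq_eq_trace]
    have hdd : ((Θ' - 1).mulVec μ + β') ⬝ᵥ ((Θ' - 1).mulVec μ + β')
        = A.mulVec μ ⬝ᵥ A.mulVec μ + A.mulVec μ ⬝ᵥ β' + β' ⬝ᵥ A.mulVec μ + β' ⬝ᵥ β' := by
      rw [← hA, add_dotProduct, dotProduct_add, dotProduct_add]
      ring
    rw [hdd, ← hquad]
    ring
  -- assemble
  have hd0 : (T - 1).mulVec μ + ((1 : Matrix (Fin n) (Fin n) ℝ) - T).mulVec μ = 0 := by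
    rw [← Matrix.add_mulVec]
    simp
  have hL := expand T (((1 : Matrix (Fin n) (Fin n) ℝ) - T).mulVec μ)
  rw [hd0] at hL
  simp only [zero_dotProduct, add_zero] at hL
  rw [expand Θ β, hL]
  have hTST : (T * S * Tᵀ).trace = (T * C).trace := by
    rw [Matrix.mul_assoc, hST]
  have key1 : (Θ * S * Tᵀ).trace = (Θ * C).trace := by
    rw [Matrix.mul_assoc, hST]
  have key2 : (T * S * Θᵀ).trace = (Θ * C).trace := by
    rw [← trace_transpose (T * S * Θᵀ), transpose_mul, transpose_mul,
      transpose_transpose, hSsym, hST]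
  have hQid : ((Θ - T) * S * (Θ - T)ᵀ).trace
      = (Θ * S * Θᵀ).trace - 2 * (Θ * C).trace + (T * C).trace := by
    simp only [transpose_sub, Matrix.sub_mul, Matrix.mul_sub, trace_sub]
    rw [key1, key2, hTST]
    ring
  have hQnn : 0 ≤ ((Θ - T) * S * (Θ - T)ᵀ).trace := by
    have := (hSpsd.mul_mul_conjTranspose_same (Θ - T)).trace_nonneg
    rwa [conjTranspose_eq_transpose_of_trivial] at this
  have hddnn : 0 ≤ ((Θ - 1).mulVec μ + β) ⬝ᵥ ((Θ - 1).mulVec μ + β) := by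
    simp only [dotProduct]
    exact Finset.sum_nonneg fun i _ => mul_self_nonneg _
  refine mul_le_mul_of_nonneg_left ?_ (by positivity)
  rw [hTST]
  linarith [hQid ▸ hQnn]
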